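/- Let G be a metrizable topological group and d_L a compatible, left-invariant, coarsely proper metric on G. Define d_∨(f,g) = d_L(f,g) + d_L(f⁻¹,g⁻¹) and d_∧(f,g) = inf_{h ∈ G} max{d_L(f,h), d_L(h⁻¹,g⁻¹)}. Then for any subset A ⊆ G the following are equivalent: (i) A is coarsely bounded; (ii) A has finite d_∨-diameter; (iii) A has finite d_∧-diameter. -/

import Mathlib

open scoped Pointwise

/-- A subset `A` of a topological group `G` is *Roelcke precompact* if for every
neighborhood `V` of the identity there is a finite set `F ⊆ G` with `A ⊆ V * F * V`,
where `V * F * V = {v * f * w : v, w ∈ V, f ∈ F}`. -/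
def RoelckePrecompact {G : Type*} [Group G] [TopologicalSpace G] (A : Set G) : Prop :=
  ∀ V ∈ nhds (1 : G), ∃ F : Finset G, A ⊆ V * (F : Set G) * V

/-- A subset `A` of a topological group is *coarsely bounded* if every continuous
left-invariant pseudometric on `G` assigns finite diameter to `A`. -/
def IsCoarselyBounded {G : Type*} [Group G] [TopologicalSpace G] (A : Set G) : Prop :=
  ∀ d : G → G → ℝ,
    Continuous (fun p : G × G => d p.1 p.2) →
    (∀ x, d x x = 0) → (∀ x y, d x y = d y x) → (∀ x y z, d x z ≤ d x y + d y z) →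
    (∀ g x y, d (g * x) (g * y) = d x y) →
    ∃ C : ℝ, ∀ x ∈ A, ∀ y ∈ A, d x y ≤ C

/-- Let `G` be a metrizable topological group and `dL` a compatible, left-invariant,
coarsely proper metric on `G`.  With `d∨ f g = dL f g + dL f⁻¹ g⁻¹` and
`d∧ f g = inf_h max (dL f h) (dL h⁻¹ g⁻¹)`, the following are equivalent for `A ⊆ G`:
(i) `A` is coarsely bounded; (ii) `A` has finite `d∨`-diameter; (iii) `A` has finite
`d∧`-diameter. -/
theorem coarselyBounded_iff_join_meet_bounded
    (G : Type*) [Group G] [TopologicalSpace G] [IsTopologicalGroup G]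
    (dL : G → G → ℝ)
    (dL_eq_zero : ∀ x y, dL x y = 0 ↔ x = y)
    (dL_symm : ∀ x y, dL x y = dL y x)
    (dL_triangle : ∀ x y z, dL x z ≤ dL x y + dL y z)
    (dL_compatible : ∀ s : Set G, IsOpen s ↔ ∀ g ∈ s, ∃ ε > 0, {h | dL g h < ε} ⊆ s)
    (dL_leftInvariant : ∀ g x y, dL (g * x) (g * y) = dL x y)
    (dL_coarselyProper :
      ∀ A : Set G, IsCoarselyBounded A ↔ ∃ C : ℝ, ∀ x ∈ A, ∀ y ∈ A, dL x y ≤ C)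
    (A : Set G) :
    (IsCoarselyBounded A ↔
      ∃ C : ℝ, ∀ x ∈ A, ∀ y ∈ A, dL x y + dL x⁻¹ y⁻¹ ≤ C) ∧
    (IsCoarselyBounded A ↔
      ∃ C : ℝ, ∀ x ∈ A, ∀ y ∈ A, (⨅ h : G, max (dL x h) (dL h⁻¹ y⁻¹)) ≤ C) := by
  -- basic facts
  have nonneg : ∀ x y, 0 ≤ dL x y := by
    intro x y
    have h1 := dL_triangle x y x
    have h2 := (dL_eq_zero x x).mpr rfl
    have h3 := dL_symm x y
    linarith
  -- dL 1 y⁻¹ = dL 1 y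
  have one_inv : ∀ y : G, dL 1 y⁻¹ = dL 1 y := by
    intro y
    have h := dL_leftInvariant y 1 y⁻¹
    simp only [mul_one, mul_inv_cancel] at h
    rw [← h, dL_symm]
  -- dL u v = dL 1 (u⁻¹ * v)
  have eq_one : ∀ u v : G, dL u v = dL 1 (u⁻¹ * v) := by
    intro u v
    have h := dL_leftInvariant u 1 (u⁻¹ * v)
    simp only [mul_one, mul_inv_cancel_left] at h
    exact h
  -- dL x⁻¹ y⁻¹ ≤ dL 1 x + dL 1 y
  have inv_bound : ∀ x y : G, dL x⁻¹ y⁻¹ ≤ dL 1 x + dL 1 y := by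
    intro x y
    rw [eq_one x⁻¹ y⁻¹, inv_inv]
    have h1 := dL_triangle 1 x (x * y⁻¹)
    have h2 := dL_leftInvariant x 1 y⁻¹
    rw [mul_one] at h2
    rw [h2, one_inv y] at h1
    exact h1
  -- bound dL 1 on a set with dL-diameter bound
  have base_bound : ∀ (C0 : ℝ) (a0 : G), a0 ∈ A →
      (∀ x ∈ A, ∀ y ∈ A, dL x y ≤ C0) → ∀ x ∈ A, dL 1 x ≤ dL 1 a0 + C0 := by
    intro C0 a0 ha0 hC0 x hx
    have := dL_triangle 1 a0 x
    have := hC0 a0 ha0 x hx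
    linarith
  constructor
  · constructor
    · intro hA
      obtain ⟨C0, hC0⟩ := (dL_coarselyProper A).mp hA
      rcases A.eq_empty_or_nonempty with h | ⟨a0, ha0⟩
      · exact ⟨0, by simp [h]⟩
      · refine ⟨C0 + 2 * (dL 1 a0 + C0), ?_⟩
        intro x hx y hy
        have hx1 := base_bound C0 a0 ha0 hC0 x hx
        have hy1 := base_bound C0 a0 ha0 hC0 y hy
        have := inv_bound x y
        have := hC0 x hx y hy
        linarith
    · intro ⟨C, hC⟩
      refine (dL_coarselyProper A).mpr ⟨C, ?_⟩
      intro x hx y hy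
      have := hC x hx y hy
      have := nonneg x⁻¹ y⁻¹
      linarith
  · constructor
    · intro hA
      obtain ⟨C0, hC0⟩ := (dL_coarselyProper A).mp hA
      refine ⟨C0, ?_⟩
      intro x hx y hy
      have hbdd : BddBelow (Set.range fun h : G => max (dL x h) (dL h⁻¹ y⁻¹)) := by
        refine ⟨0, ?_⟩
        rintro _ ⟨h, rfl⟩
        exact le_max_of_le_left (nonneg x h)
      have hle : (⨅ h : G, max (dL x h) (dL h⁻¹ y⁻¹)) ≤ max (dL x y) (dL y⁻¹ y⁻¹) :=
        ciInf_le hbdd y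
      rw [(dL_eq_zero y⁻¹ y⁻¹).mpr rfl] at hle
      have : max (dL x y) 0 = dL x y := max_eq_left (nonneg x y)
      rw [this] at hle
      exact hle.trans (hC0 x hx y hy)
    · intro ⟨C, hC⟩
      rcases A.eq_empty_or_nonempty with h | ⟨y0, hy0⟩
      · exact (dL_coarselyProper A).mpr ⟨0, by simp [h]⟩
      · -- for each x ∈ A, find h with dL x h < C+1 and dL h⁻¹ y0⁻¹ < C+1
        have key : ∀ x ∈ A, ∃ h : G, dL x h < C + 1 ∧ dL h⁻¹ y0⁻¹ < C + 1 := by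
          intro x hx
          have hlt : (⨅ h : G, max (dL x h) (dL h⁻¹ y0⁻¹)) < C + 1 :=
            lt_of_le_of_lt (hC x hx y0 hy0) (by linarith)
          obtain ⟨h, hh⟩ := exists_lt_of_ciInf_lt hlt
          exact ⟨h, lt_of_le_of_lt (le_max_left _ _) hh,
            lt_of_le_of_lt (le_max_right _ _) hh⟩
        refine (dL_coarselyProper A).mpr ⟨(C + 1) + (2 * dL 1 y0⁻¹ + 2 * (C + 1)) + (C + 1), ?_⟩
        intro x hx y hy
        obtain ⟨h1, hh1, hh1'⟩ := key x hx
        obtain ⟨h2, hh2, hh2'⟩ := key y hy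
        -- dL 1 h1⁻¹ ≤ dL 1 y0⁻¹ + (C+1), same for h2
        have b1 : dL 1 h1⁻¹ ≤ dL 1 y0⁻¹ + (C + 1) := by
          have := dL_triangle 1 y0⁻¹ h1⁻¹
          have := dL_symm y0⁻¹ h1⁻¹
          linarith
        have b2 : dL 1 h2⁻¹ ≤ dL 1 y0⁻¹ + (C + 1) := by
          have := dL_triangle 1 y0⁻¹ h2⁻¹
          have := dL_symm y0⁻¹ h2⁻¹
          linarith
        -- dL h1 h2 = dL h1⁻¹⁻¹ h2⁻¹⁻¹ ≤ dL 1 h1⁻¹ + dL 1 h2⁻¹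
        have bmid : dL h1 h2 ≤ 2 * dL 1 y0⁻¹ + 2 * (C + 1) := by
          have := inv_bound h1⁻¹ h2⁻¹
          rw [inv_inv, inv_inv] at this
          linarith
        have t1 := dL_triangle x h1 y
        have t2 := dL_triangle h1 h2 y
        have := dL_symm y h2
        linarith
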